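/- Let ε = e^{−2πi/3} ∈ ℂ and let C₁(z,w) = 4z² + 3(w² + 1) + 6z(w + 1) + 5w, C_ε(z,w) = 4ε̄z² + 3(εw² + 1) + 6z(w + ε) + 5ε̄w, C_{ε̄}(z,w) = 4εz² + 3(ε̄w² + 1) + 6z(w + ε̄) + 5εw, where ε̄ = e^{2πi/3}. There exists a constant c ∈ ℂ, c ≠ 0, such that for all z, w ∈ ℂ one has 64(w − z²)³ − 27(1 + w³ − 2zw)² = c·C₁(z,w)·C_ε(z,w)·C_{ε̄}(z,w). (Thus the critical level curve {R_{c1} = 27/64} of R_{c1}(z,w) = (w − z²)³/(1 + w³ − 2zw)² is the union of three conics permuted by the order-3 symmetry (z,w) ↦ (εz, ε²w).) -/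
import Mathlib


/-- The critical level curve `{R_{c1} = 27/64}` of `R_{c1}(z,w) = (w−z²)³/(1+w³−2zw)²`
is the union of three conics permuted by the order-3 symmetry `(z,w) ↦ (εz, ε²w)`. -/
theorem stmt_10 (ε εb : ℂ)
    (hε : ε = Complex.exp (-(2 * (Real.pi : ℂ) * Complex.I) / 3))
    (hεb : εb = Complex.exp ((2 * (Real.pi : ℂ) * Complex.I) / 3))
    (C₁ Cε Cεb : ℂ → ℂ → ℂ)
    (hC₁ : ∀ z w : ℂ, C₁ z w = 4*z^2 + 3*(w^2 + 1) + 6*z*(w + 1) + 5*w)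
    (hCε : ∀ z w : ℂ, Cε z w = 4*εb*z^2 + 3*(ε*w^2 + 1) + 6*z*(w + ε) + 5*εb*w)
    (hCεb : ∀ z w : ℂ, Cεb z w = 4*ε*z^2 + 3*(εb*w^2 + 1) + 6*z*(w + εb) + 5*ε*w) :
    ∃ c : ℂ, c ≠ 0 ∧ ∀ z w : ℂ,
      64*(w - z^2)^3 - 27*(1 + w^3 - 2*z*w)^2 = c * C₁ z w * Cε z w * Cεb z w := by
  -- ε³ = 1
  have hcube : ε ^ 3 = 1 := by
    rw [hε, ← Complex.exp_nat_mul]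
    have : (3 : ℂ) * (-(2 * (Real.pi : ℂ) * Complex.I) / 3) =
        -(2 * (Real.pi : ℂ) * Complex.I) := by ring
    push_cast
    rw [this, Complex.exp_neg, Complex.exp_two_pi_mul_I, inv_one]
  -- ε ≠ 1
  have hne : ε ≠ 1 := by
    intro h
    rw [hε, Complex.exp_eq_one_iff] at h
    obtain ⟨n, hn⟩ := h
    have hpi : (Real.pi : ℂ) ≠ 0 := by
      exact_mod_cast Real.pi_ne_zero
    have h2 : ((3 * n + 1 : ℤ) : ℂ) * (2 * (Real.pi : ℂ) * Complex.I) = 0 := by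
      push_cast
      linear_combination (-3) * hn
    have h3 : ((3 * n + 1 : ℤ) : ℂ) = 0 := by
      rcases mul_eq_zero.mp h2 with h | h
      · exact h
      · exfalso
        have := Complex.I_ne_zero
        simp [hpi, this] at h
    have : (3 * n + 1 : ℤ) = 0 := by exact_mod_cast h3
    omega
  -- ε² + ε + 1 = 0
  have hquad : ε ^ 2 + ε + 1 = 0 := by
    have h0 : (ε - 1) * (ε ^ 2 + ε + 1) = 0 := by
      linear_combination hcube
    rcases mul_eq_zero.mp h0 with h | h
    · exact absurd (sub_eq_zero.mp h) hne
    · exact h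
  -- εb = ε²
  have hsq : εb = ε ^ 2 := by
    rw [hε, hεb, ← Complex.exp_nat_mul]
    rw [show ((2:ℕ) : ℂ) * (-(2 * (Real.pi : ℂ) * Complex.I) / 3) =
        (2 * (Real.pi : ℂ) * Complex.I) / 3 + (-(2 * (Real.pi : ℂ) * Complex.I)) by ring,
      Complex.exp_add, Complex.exp_neg, Complex.exp_two_pi_mul_I, inv_one, mul_one]
  have hεb' : εb = -1 - ε := by
    rw [hsq]; linear_combination hquad
  refine ⟨-1, by norm_num, fun z w => ?_⟩
  rw [hC₁ z w, hCε z w, hCεb z w, hεb']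
  linear_combination
    ((-75)*w^2 + (-35)*w^3 + (48)*w^4 + (45)*w^5 + (-27)*w^6 + (180)*z*w + (42)*z*w^2 +
      (30)*z*w^3 + (18)*z*w^4 + (-54)*z*w^5 + (-108)*z^2 + (60)*z^2*w + (-192)*z^2*w^2 +
      (-96)*z^2*w^3 + (36)*z^2*w^4 + (-72)*z^3 + (24)*z^3*w + (-96)*z^3*w^2 + (144)*z^3*w^3 +
      (96)*z^4 + (48)*z^4*w + (48)*z^4*w^2 + (96)*z^5 + (-96)*z^5*w + (-64)*z^6) * hquad
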